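/- For any r, K ∈ ℕ with r ≤ K, there exists a ReLU network φ: ℝ² → ℝ with width 2^{r+1}+3 and depth 4⌈K/r⌉+1 such that for every x of the form x = Σ_{i=1}^K 2^{−i} x_i with all x_i ∈ {0,1}, and every integer k with 1 ≤ k ≤ K, one has φ(x, k) = x_k. -/

import Mathlib

open scoped BigOperators ENNReal

noncomputable section

/-- `f` is an affine map `x ↦ A x + b`. -/
def IsAffineMap (din dout : ℕ) (f : (Fin din → ℝ) → (Fin dout → ℝ)) : Prop :=
  ∃ (A : Matrix (Fin dout) (Fin din) ℝ) (b : Fin dout → ℝ),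
    ∀ x i, f x i = (∑ j, A i j * x j) + b i

/-- `ReluNetExact din dout f N L` asserts that `f = T_L ∘ σ ∘ ⋯ ∘ σ ∘ T_1` where each `T_l`
is affine, `σ` is the coordinatewise ReLU `t ↦ max t 0`, all intermediate dimensions are at
most `N` (the width), and there are `L` affine layers (the depth). -/
inductive ReluNetExact : (din dout : ℕ) → ((Fin din → ℝ) → (Fin dout → ℝ)) → ℕ → ℕ → Prop
  | affine {din dout N : ℕ} {f : (Fin din → ℝ) → (Fin dout → ℝ)}
      (hf : IsAffineMap din dout f) : ReluNetExact din dout f N 1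
  | comp {din k dout N L : ℕ} (hk : k ≤ N) {T : (Fin din → ℝ) → (Fin k → ℝ)}
      (hT : IsAffineMap din k T) {g : (Fin k → ℝ) → (Fin dout → ℝ)}
      (hg : ReluNetExact k dout g N L) :
      ReluNetExact din dout (fun x => g (fun i => max (T x i) 0)) N (L + 1)

/-- `f` is representable by a ReLU network with width at most `N` and depth at most `L`. -/
def IsReluNet (din dout : ℕ) (f : (Fin din → ℝ) → (Fin dout → ℝ)) (N L : ℕ) : Prop :=
  ∃ L' ≤ L, ReluNetExact din dout f N L'

/-- Scalar-valued version of `IsReluNet`. -/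
def IsReluNet1 (din : ℕ) (f : (Fin din → ℝ) → ℝ) (N L : ℕ) : Prop :=
  IsReluNet din 1 (fun x _ => f x) N L

namespace Stmt7

def AffFun (n : ℕ) (u : (Fin n → ℝ) → ℝ) : Prop :=
  ∃ a : Fin n → ℝ, ∃ c : ℝ, ∀ x, u x = (∑ j, a j * x j) + c

lemma affFun_const {n : ℕ} (c : ℝ) : AffFun n fun _ => c :=
  ⟨0, c, by simp⟩

lemma affFun_coord {n : ℕ} (j : Fin n) : AffFun n fun x => x j :=
  ⟨fun i => if i = j then 1 else 0, 0, by
    intro x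
    simp [ite_mul, Finset.sum_ite_eq']⟩

lemma AffFun.add {n : ℕ} {u v : (Fin n → ℝ) → ℝ} (hu : AffFun n u) (hv : AffFun n v) :
    AffFun n fun x => u x + v x := by
  obtain ⟨a, c, ha⟩ := hu; obtain ⟨a', c', ha'⟩ := hv
  exact ⟨a + a', c + c', fun x => by
    simp [ha, ha', add_mul, Finset.sum_add_distrib]; ring⟩

lemma AffFun.const_mul {n : ℕ} {u : (Fin n → ℝ) → ℝ} (t : ℝ) (hu : AffFun n u) :
    AffFun n fun x => t * u x := by
  obtain ⟨a, c, ha⟩ := hu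
  exact ⟨fun j => t * a j, t * c, fun x => by
    simp [ha, Finset.mul_sum, mul_add, mul_assoc]⟩

lemma AffFun.neg {n : ℕ} {u : (Fin n → ℝ) → ℝ} (hu : AffFun n u) :
    AffFun n fun x => -u x := by
  have := hu.const_mul (-1); simpa using this

lemma AffFun.sub {n : ℕ} {u v : (Fin n → ℝ) → ℝ} (hu : AffFun n u) (hv : AffFun n v) :
    AffFun n fun x => u x - v x := by
  have := hu.add hv.neg; simpa [sub_eq_add_neg] using this

lemma AffFun.add_const {n : ℕ} {u : (Fin n → ℝ) → ℝ} (hu : AffFun n u) (c : ℝ) :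
    AffFun n fun x => u x + c := hu.add (affFun_const c)

lemma AffFun.sub_const {n : ℕ} {u : (Fin n → ℝ) → ℝ} (hu : AffFun n u) (c : ℝ) :
    AffFun n fun x => u x - c := hu.sub (affFun_const c)

lemma affFun_sum {n : ℕ} {ι : Type*} (s : Finset ι) (u : ι → (Fin n → ℝ) → ℝ)
    (h : ∀ i ∈ s, AffFun n (u i)) : AffFun n fun x => ∑ i ∈ s, u i x := by
  classical
  induction s using Finset.induction_on with
  | empty => simpa using affFun_const (n := n) 0
  | insert a s hne ih =>
    have h1 := h a (Finset.mem_insert_self a s)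
    have h2 := ih fun i hi => h i (Finset.mem_insert_of_mem hi)
    have := h1.add h2
    simp only [Finset.sum_insert hne]
    exact this

lemma isAffineMap_of {din dout : ℕ} {f : (Fin din → ℝ) → (Fin dout → ℝ)}
    (h : ∀ i, AffFun din fun x => f x i) : IsAffineMap din dout f := by
  choose a c ha using h
  exact ⟨fun i j => a i j, c, fun x i => ha i x⟩

lemma isAffineMap_comp {d1 d2 d3 : ℕ} {g : (Fin d2 → ℝ) → (Fin d3 → ℝ)}
    {f : (Fin d1 → ℝ) → (Fin d2 → ℝ)} (hg : IsAffineMap d2 d3 g) (hf : IsAffineMap d1 d2 f) :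
    IsAffineMap d1 d3 fun x => g (f x) := by
  obtain ⟨A, b, hA⟩ := hg; obtain ⟨B, c, hB⟩ := hf
  refine ⟨fun i l => ∑ j, A i j * B j l, fun i => (∑ j, A i j * c j) + b i, fun x i => ?_⟩
  beta_reduce
  rw [hA]
  simp only [hB, mul_add, Finset.mul_sum, Finset.sum_add_distrib]
  rw [Finset.sum_comm]
  simp only [Finset.sum_mul]
  ring_nf

lemma netCongr {d1 d2 N L : ℕ} {f g : (Fin d1 → ℝ) → (Fin d2 → ℝ)}
    (h : ReluNetExact d1 d2 f N L) (e : ∀ x, f x = g x) : ReluNetExact d1 d2 g N L := by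
  have : f = g := funext e
  exact this ▸ h

lemma netPrecomp {d1 d2 d3 N L : ℕ} {f : (Fin d2 → ℝ) → (Fin d3 → ℝ)}
    (h : ReluNetExact d2 d3 f N L) {g : (Fin d1 → ℝ) → (Fin d2 → ℝ)}
    (hg : IsAffineMap d1 d2 g) : ReluNetExact d1 d3 (fun x => f (g x)) N L := by
  induction h generalizing d1 with
  | affine hf => exact ReluNetExact.affine (isAffineMap_comp hf hg)
  | comp hk hT hg' ih =>
    rename_i T _
    exact ReluNetExact.comp hk (isAffineMap_comp hT hg) hg'


lemma geom_nat (n : ℕ) : ∑ u ∈ Finset.range n, 2 ^ u = 2 ^ n - 1 := by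
  induction n with
  | zero => simp
  | succ n ih =>
    rw [Finset.sum_range_succ, ih]
    have : 1 ≤ 2 ^ n := Nat.one_le_two_pow
    omega

lemma bit_extract {n u0 : ℕ} (δ : ℕ → ℕ) (hδ : ∀ u, δ u ≤ 1) (h : u0 < n) :
    ((∑ u ∈ Finset.range n, δ u * 2 ^ u) / 2 ^ u0) % 2 = δ u0 := by
  have hsplit : Finset.range n = Finset.range u0 ∪ Finset.Ico u0 n :=
    by rw [Finset.range_eq_Ico, Finset.range_eq_Ico]; exact (Finset.Ico_union_Ico_eq_Ico (Nat.zero_le _) h.le).symm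
  rw [hsplit, Finset.sum_union (by
    rw [Finset.range_eq_Ico]; exact Finset.Ico_disjoint_Ico_consecutive 0 u0 n)]
  rw [Finset.sum_eq_sum_Ico_succ_bot h]
  have hL : (∑ u ∈ Finset.range u0, δ u * 2 ^ u) < 2 ^ u0 := by
    calc ∑ u ∈ Finset.range u0, δ u * 2 ^ u ≤ ∑ u ∈ Finset.range u0, 1 * 2 ^ u :=
          Finset.sum_le_sum fun u _ => Nat.mul_le_mul_right _ (hδ u)
      _ = 2 ^ u0 - 1 := by simpa using geom_nat u0
      _ < 2 ^ u0 := by have : 1 ≤ 2 ^ u0 := Nat.one_le_two_pow; omega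
  have hHi : ∀ u ∈ Finset.Ico (u0+1) n, δ u * 2 ^ u = 2 ^ (u0+1) * (δ u * 2 ^ (u - (u0+1))) := by
    intro u hu
    simp only [Finset.mem_Ico] at hu
    have h2 : 2 ^ u = 2 ^ (u0+1) * 2 ^ (u - (u0+1)) := by
      rw [← pow_add]; congr 1; omega
    rw [h2]; ring
  rw [Finset.sum_congr rfl hHi, ← Finset.mul_sum]
  set L := ∑ u ∈ Finset.range u0, δ u * 2 ^ u
  set Hi := ∑ u ∈ Finset.Ico (u0+1) n, δ u * 2 ^ (u - (u0+1))
  have h2 : (0:ℕ) < 2 ^ u0 := Nat.pow_pos (by norm_num)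
  have : L + (δ u0 * 2 ^ u0 + 2 ^ (u0+1) * Hi) = L + 2 ^ u0 * (δ u0 + 2 * Hi) := by
    rw [pow_succ]; ring
  rw [this, Nat.add_mul_div_left _ _ h2, Nat.div_eq_of_lt hL]
  have := hδ u0
  omega

lemma step_eval (Kk m R s : ℕ) (hR : R < 2 ^ Kk) :
    max (((m:ℝ) * 2 ^ Kk + R - s * 2 ^ Kk) + 1) 0 - max ((m:ℝ) * 2 ^ Kk + R - s * 2 ^ Kk) 0
      = if s ≤ m then 1 else 0 := by
  by_cases h : s ≤ m
  · have h0 : (0:ℝ) ≤ (m:ℝ) * 2 ^ Kk + R - s * 2 ^ Kk := by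
      have : (s:ℝ) * 2 ^ Kk ≤ (m:ℝ) * 2 ^ Kk := by
        apply mul_le_mul_of_nonneg_right _ (by positivity)
        exact_mod_cast h
      have : (0:ℝ) ≤ (R:ℝ) := by positivity
      nlinarith [Nat.cast_nonneg (α := ℝ) R]
    rw [if_pos h, max_eq_left (by linarith), max_eq_left h0]; ring
  · push_neg at h
    have h1 : (m:ℝ) * 2 ^ Kk + R - s * 2 ^ Kk + 1 ≤ 0 := by
      have hms : (m:ℝ) + 1 ≤ s := by exact_mod_cast h
      have hRr : (R:ℝ) ≤ 2 ^ Kk - 1 := by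
        have : (R:ℝ) + 1 ≤ 2 ^ Kk := by exact_mod_cast hR
        linarith
      have h2 : ((m:ℝ) + 1) * 2 ^ Kk ≤ (s:ℝ) * 2 ^ Kk :=
        mul_le_mul_of_nonneg_right hms (by positivity)
      nlinarith
    rw [if_neg (by omega), max_eq_right h1, max_eq_right (by linarith)]; ring

lemma sum_ite_le {n m : ℕ} (h : m ≤ n) (g : ℕ → ℝ) :
    ∑ s ∈ Finset.Icc 1 n, (if s ≤ m then g s else 0) = ∑ s ∈ Finset.Icc 1 m, g s := by
  rw [← Finset.sum_filter]
  congr 1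
  ext s
  simp only [Finset.mem_filter, Finset.mem_Icc]
  omega

lemma telescope (m : ℕ) (f : ℕ → ℝ) (hf0 : f 0 = 0) :
    ∑ s ∈ Finset.Icc 1 m, (f s - f (s-1)) = f m := by
  induction m with
  | zero => simp [hf0]
  | succ m ih =>
    rw [Finset.sum_Icc_succ_top (by omega), ih, show m+1-1 = m by omega]; ring

lemma hat_eval (k c : ℕ) :
    max ((k:ℝ) - c + 1) 0 - 2 * max ((k:ℝ) - c) 0 + max ((k:ℝ) - c - 1) 0
      = if k = c then 1 else 0 := by
  rcases lt_trichotomy k c with h | h | h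
  · have : (k:ℝ) + 1 ≤ c := by exact_mod_cast h
    rw [if_neg (by omega), max_eq_right (by linarith), max_eq_right (by linarith),
      max_eq_right (by linarith)]; ring
  · subst h; simp
  · have : (c:ℝ) + 1 ≤ k := by exact_mod_cast h
    rw [if_neg (by omega), max_eq_left (by linarith), max_eq_left (by linarith),
      max_eq_left (by linarith)]; ring

lemma prod_eval {p q : ℝ} (hp : p = 0 ∨ p = 1) (hq : q = 0 ∨ q = 1) :
    max (p + q - 1) 0 = p * q := by
  rcases hp with h | h <;> rcases hq with h' | h' <;> subst h <;> subst h' <;> norm_num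

lemma sum_single_ind (a rr k : ℕ) (v : ℕ → ℝ) :
    ∑ t ∈ Finset.Icc 1 rr, (if k = a + t then v (a+t) else 0)
      = if a < k ∧ k ≤ a + rr then v k else 0 := by
  by_cases h : a < k ∧ k ≤ a + rr
  · rw [if_pos h, Finset.sum_eq_single (k - a)]
    · rw [if_pos (by omega), show a + (k-a) = k by omega]
    · intro t _ ht; rw [if_neg (by omega)]
    · intro hmem; simp only [Finset.mem_Icc] at hmem; omega
  · rw [if_neg h]
    apply Finset.sum_eq_zero
    intro t ht; simp only [Finset.mem_Icc] at ht
    rw [if_neg (by omega)]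


/-! ## Definitions -/

def Wd (r : ℕ) : ℕ := 2 ^ (r + 1) + 3

lemma Wd_pos (r : ℕ) : 0 < Wd r := by unfold Wd; positivity

def idx (r : ℕ) (n : ℕ) : Fin (Wd r) := ⟨n % Wd r, Nat.mod_lt _ (Wd_pos r)⟩

lemma idx_val (r n : ℕ) (h : n < Wd r) : (idx r n).val = n := Nat.mod_eq_of_lt h

lemma four_r_le (r : ℕ) : 4 * r ≤ 2 ^ (r + 1) := by
  induction r with
  | zero => norm_num
  | succ r ih =>
    have : 4 ≤ 2 ^ (r + 1) ∨ r = 0 := by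
      rcases Nat.eq_zero_or_pos r with h | h
      · right; exact h
      · left
        calc 4 = 2 ^ 2 := by norm_num
        _ ≤ 2 ^ (r + 1) := Nat.pow_le_pow_right (by norm_num) (by omega)
    rcases this with h | h
    · rw [pow_succ]; omega
    · subst h; norm_num

lemma two_le_pow (r : ℕ) (hr : 0 < r) : 2 ≤ 2 ^ r :=
  calc 2 = 2 ^ 1 := rfl
  _ ≤ 2 ^ r := Nat.pow_le_pow_right (by norm_num) hr

def gbit (r t s : ℕ) : ℝ := ((s / 2 ^ (r - t)) % 2 : ℕ)

def L1 (r K : ℕ) (x : Fin (Wd r) → ℝ) (i : Fin (Wd r)) : ℝ :=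
  if (i : ℕ) = 0 then x (idx r 0)
  else if (i : ℕ) = 1 then x (idx r 1)
  else if (i : ℕ) = 2 then x (idx r 2)
  else if (i : ℕ) < 2 + 2 ^ r then
    (2:ℝ) ^ K * ((2:ℝ) ^ r * x (idx r 0) - (((i : ℕ) - 2 : ℕ) : ℝ)) + 1
  else if (i : ℕ) < 1 + 2 ^ (r + 1) then
    (2:ℝ) ^ K * ((2:ℝ) ^ r * x (idx r 0) - (((i : ℕ) - 1 - 2 ^ r : ℕ) : ℝ))
  else 0

def L2 (r a : ℕ) (x : Fin (Wd r) → ℝ) (i : Fin (Wd r)) : ℝ :=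
  if (i : ℕ) = 0 then
    (2:ℝ) ^ r * x (idx r 0) -
      ∑ s ∈ Finset.Icc 1 (2 ^ r - 1), (x (idx r (s + 2)) - x (idx r (s + 1 + 2 ^ r)))
  else if (i : ℕ) = 1 then x (idx r 1)
  else if (i : ℕ) = 2 then x (idx r 2)
  else if (i : ℕ) < 3 + r then
    ∑ s ∈ Finset.Icc 1 (2 ^ r - 1),
      (gbit r ((i : ℕ) - 2) s - gbit r ((i : ℕ) - 2) (s - 1)) *
        (x (idx r (s + 2)) - x (idx r (s + 1 + 2 ^ r)))
  else if (i : ℕ) < 3 + 2 * r then x (idx r 1) - ((a + ((i : ℕ) - 2 - r) : ℕ) : ℝ) + 1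
  else if (i : ℕ) < 3 + 3 * r then x (idx r 1) - ((a + ((i : ℕ) - 2 - 2 * r) : ℕ) : ℝ)
  else if (i : ℕ) < 3 + 4 * r then x (idx r 1) - ((a + ((i : ℕ) - 2 - 3 * r) : ℕ) : ℝ) - 1
  else 0

def L3 (r : ℕ) (x : Fin (Wd r) → ℝ) (i : Fin (Wd r)) : ℝ :=
  if (i : ℕ) = 0 then x (idx r 0)
  else if (i : ℕ) = 1 then x (idx r 1)
  else if (i : ℕ) = 2 then x (idx r 2)
  else if (i : ℕ) < 3 + r then
    x (idx r ((i : ℕ))) +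
      (x (idx r ((i : ℕ) + r)) - 2 * x (idx r ((i : ℕ) + 2 * r)) + x (idx r ((i : ℕ) + 3 * r))) - 1
  else 0

def L4 (r : ℕ) (x : Fin (Wd r) → ℝ) (i : Fin (Wd r)) : ℝ :=
  if (i : ℕ) = 0 then x (idx r 0)
  else if (i : ℕ) = 1 then x (idx r 1)
  else if (i : ℕ) = 2 then x (idx r 2) + ∑ t ∈ Finset.Icc 1 r, x (idx r (t + 2))
  else 0

def chunkMap (r K a : ℕ) (x : Fin (Wd r) → ℝ) : Fin (Wd r) → ℝ :=
  fun i => max (L4 r (fun i => max (L3 r (fun i => max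
    (L2 r a (fun i => max (L1 r K x i) 0) i) 0) i) 0) i) 0

def Hnet (r K : ℕ) : ℕ → ℕ → (Fin (Wd r) → ℝ) → ℝ
  | 0, _ => fun x => x (idx r 2)
  | c + 1, j₀ => fun x => Hnet r K c (j₀ + 1) (chunkMap r K (j₀ * r) x)

/-! ## Affineness -/

lemma L1_affine (r K : ℕ) : IsAffineMap (Wd r) (Wd r) (L1 r K) := by
  apply isAffineMap_of
  intro i
  unfold L1
  by_cases h1 : (i : ℕ) = 0
  · simp only [h1, if_pos]; simpa using affFun_coord (n := Wd r) (idx r 0)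
  by_cases h2 : (i : ℕ) = 1
  · simp only [h1, h2, if_neg, if_pos, if_true, if_false]; exact affFun_coord _
  by_cases h3 : (i : ℕ) = 2
  · simp only [h1, h2, h3, if_neg, if_pos, if_true, if_false]; exact affFun_coord _
  by_cases h4 : (i : ℕ) < 2 + 2 ^ r
  · simp only [h1, h2, h3, h4, if_neg, if_pos, if_true, if_false]
    exact ((((affFun_coord _).const_mul _).sub_const _).const_mul _).add_const _
  by_cases h5 : (i : ℕ) < 1 + 2 ^ (r + 1)
  · simp only [h1, h2, h3, h4, h5, if_neg, if_pos, if_true, if_false]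
    exact (((affFun_coord _).const_mul _).sub_const _).const_mul _
  · simp only [h1, h2, h3, h4, h5, if_neg, if_false]
    exact affFun_const 0

lemma L2_affine (r a : ℕ) : IsAffineMap (Wd r) (Wd r) (L2 r a) := by
  apply isAffineMap_of
  intro i
  unfold L2
  by_cases h1 : (i : ℕ) = 0
  · simp only [h1, if_pos]
    exact ((affFun_coord _).const_mul _).sub
      (affFun_sum _ _ fun s _ => (affFun_coord _).sub (affFun_coord _))
  by_cases h2 : (i : ℕ) = 1
  · simp only [h1, h2, if_neg, if_pos, if_true, if_false]; exact affFun_coord _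
  by_cases h3 : (i : ℕ) = 2
  · simp only [h1, h2, h3, if_neg, if_pos, if_true, if_false]; exact affFun_coord _
  by_cases h4 : (i : ℕ) < 3 + r
  · simp only [h1, h2, h3, h4, if_neg, if_pos, if_true, if_false]
    exact affFun_sum _ _ fun s _ =>
      ((affFun_coord _).sub (affFun_coord _)).const_mul _
  by_cases h5 : (i : ℕ) < 3 + 2 * r
  · simp only [h1, h2, h3, h4, h5, if_neg, if_pos, if_true, if_false]
    exact ((affFun_coord _).sub_const _).add_const _
  by_cases h6 : (i : ℕ) < 3 + 3 * r
  · simp only [h1, h2, h3, h4, h5, h6, if_neg, if_pos, if_true, if_false]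
    exact (affFun_coord _).sub_const _
  by_cases h7 : (i : ℕ) < 3 + 4 * r
  · simp only [h1, h2, h3, h4, h5, h6, h7, if_neg, if_pos, if_true, if_false]
    exact ((affFun_coord _).sub_const _).sub_const _
  · simp only [h1, h2, h3, h4, h5, h6, h7, if_neg, if_false]
    exact affFun_const 0

lemma L3_affine (r : ℕ) : IsAffineMap (Wd r) (Wd r) (L3 r) := by
  apply isAffineMap_of
  intro i
  unfold L3
  by_cases h1 : (i : ℕ) = 0
  · simp only [h1, if_pos]; simpa using affFun_coord (n := Wd r) (idx r 0)
  by_cases h2 : (i : ℕ) = 1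
  · simp only [h1, h2, if_neg, if_pos, if_true, if_false]; exact affFun_coord _
  by_cases h3 : (i : ℕ) = 2
  · simp only [h1, h2, h3, if_neg, if_pos, if_true, if_false]; exact affFun_coord _
  by_cases h4 : (i : ℕ) < 3 + r
  · simp only [h1, h2, h3, h4, if_neg, if_pos, if_true, if_false]
    exact ((affFun_coord _).add (((affFun_coord _).sub
      ((affFun_coord _).const_mul 2 )).add (affFun_coord _))).sub_const _
  · simp only [h1, h2, h3, h4, if_neg, if_false]
    exact affFun_const 0

lemma L4_affine (r : ℕ) : IsAffineMap (Wd r) (Wd r) (L4 r) := by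
  apply isAffineMap_of
  intro i
  unfold L4
  by_cases h1 : (i : ℕ) = 0
  · simp only [h1, if_pos]; simpa using affFun_coord (n := Wd r) (idx r 0)
  by_cases h2 : (i : ℕ) = 1
  · simp only [h1, h2, if_neg, if_pos, if_true, if_false]; exact affFun_coord _
  by_cases h3 : (i : ℕ) = 2
  · simp only [h1, h2, h3, if_neg, if_pos, if_true, if_false]
    exact (affFun_coord _).add (affFun_sum _ _ fun t _ => affFun_coord _)
  · simp only [h1, h2, h3, if_neg, if_false]
    exact affFun_const 0

/-! ## The network structure -/

lemma Hnet_isNet (r K : ℕ) (c j₀ : ℕ) :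
    ReluNetExact (Wd r) 1 (fun x (_ : Fin 1) => Hnet r K c j₀ x) (Wd r) (4 * c + 1) := by
  induction c generalizing j₀ with
  | zero =>
    apply ReluNetExact.affine
    apply isAffineMap_of
    intro _
    simp only [Hnet]
    exact affFun_coord _
  | succ c ih =>
    have n4 := ih (j₀ + 1)
    have n3 := ReluNetExact.comp (le_refl (Wd r)) (L4_affine r) n4
    have n2 := ReluNetExact.comp (le_refl (Wd r)) (L3_affine r) n3
    have n1 := ReluNetExact.comp (le_refl (Wd r)) (L2_affine r (j₀ * r)) n2
    have n0 := ReluNetExact.comp (le_refl (Wd r)) (L1_affine r K) n1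
    have : 4 * c + 1 + 1 + 1 + 1 + 1 = 4 * (c + 1) + 1 := by ring
    rw [this] at n0
    exact netCongr n0 (fun x => by simp only [Hnet]; rfl)


def Ynat (K : ℕ) (bn : ℕ → ℕ) (a : ℕ) : ℕ := ∑ i ∈ Finset.Icc (a+1) K, bn i * 2 ^ (K - i)

def bnn (K : ℕ) (bn : ℕ → ℕ) (i : ℕ) : ℕ := if i ≤ K then bn i else 0

def Mnat (K : ℕ) (bn : ℕ → ℕ) (a r : ℕ) : ℕ :=
  ∑ u ∈ Finset.range r, bnn K bn (a + r - u) * 2 ^ u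

lemma bnn_le {K : ℕ} {bn : ℕ → ℕ} (hbn : ∀ i, bn i ≤ 1) (i : ℕ) : bnn K bn i ≤ 1 := by
  unfold bnn; split <;> simp [hbn i]

lemma onebit (K : ℕ) (bn : ℕ → ℕ) (c : ℕ) :
    2 ^ (c+1) * Ynat K bn c = bnn K bn (c+1) * 2 ^ K + 2 ^ (c+1) * Ynat K bn (c+1) := by
  unfold Ynat bnn
  by_cases h : c + 1 ≤ K
  · rw [if_pos h]
    have hins : Finset.Icc (c+1) K = insert (c+1) (Finset.Icc (c+2) K) := by
      ext i; simp only [Finset.mem_Icc, Finset.mem_insert]; omega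
    rw [hins, Finset.sum_insert (by simp only [Finset.mem_Icc]; omega)]
    rw [Nat.mul_add]
    congr 1
    rw [← Nat.mul_assoc, Nat.mul_comm (2^(c+1)) (bn (c+1)), Nat.mul_assoc, ← pow_add]
    congr 2
    omega
  · rw [if_neg h]
    have h1 : Finset.Icc (c+1) K = ∅ := by
      apply Finset.Icc_eq_empty; omega
    have h2 : Finset.Icc (c+2) K = ∅ := by
      apply Finset.Icc_eq_empty; omega
    simp [h1, h2]

lemma C1 (K : ℕ) (bn : ℕ → ℕ) (a : ℕ) : ∀ r,
    2 ^ r * (2 ^ a * Ynat K bn a)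
      = Mnat K bn a r * 2 ^ K + 2 ^ (a+r) * Ynat K bn (a+r) := by
  intro r
  induction r with
  | zero => simp [Mnat]
  | succ r ih =>
    have hM : Mnat K bn a (r+1) = 2 * Mnat K bn a r + bnn K bn (a+r+1) := by
      unfold Mnat
      rw [Finset.sum_range_succ']
      have he : ∀ u, bnn K bn (a + (r+1) - (u+1)) * 2 ^ (u+1)
          = 2 * (bnn K bn (a + r - u) * 2 ^ u) := by
        intro u
        have h : a + (r+1) - (u+1) = a + r - u := by omega
        rw [h, pow_succ]; ring
      rw [Finset.sum_congr rfl fun u _ => he u, ← Finset.mul_sum]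
      have h0 : a + (r+1) - 0 = a + r + 1 := by omega
      rw [h0]
      ring
    have e1 : 2 ^ (r+1) * (2 ^ a * Ynat K bn a) = 2 * (2 ^ r * (2 ^ a * Ynat K bn a)) := by
      rw [pow_succ]; ring
    have e2 : 2 * (Mnat K bn a r * 2 ^ K + 2 ^ (a+r) * Ynat K bn (a+r))
        = 2 * (Mnat K bn a r * 2 ^ K) + 2 ^ (a+r+1) * Ynat K bn (a+r) := by
      rw [pow_succ]; ring
    rw [e1, ih, e2, onebit K bn (a+r), hM]
    have : a + (r+1) = a + r + 1 := rfl
    rw [this]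
    ring

lemma C2 {K : ℕ} {bn : ℕ → ℕ} (hbn : ∀ i, bn i ≤ 1) (c : ℕ) :
    2 ^ c * Ynat K bn c < 2 ^ K := by
  have key : ∀ d c, K ≤ c + d → 2 ^ c * Ynat K bn c < 2 ^ K := by
    intro d
    induction d with
    | zero =>
      intro c hc
      have : Finset.Icc (c+1) K = ∅ := Finset.Icc_eq_empty (by omega)
      unfold Ynat
      rw [this]
      simp [Nat.pow_pos, Nat.one_le_two_pow]
    | succ d ih =>
      intro c hc
      by_cases h : K ≤ c + d
      · exact ih c h
      · have h1 := onebit K bn c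
        have h2 : 2 ^ (c+1) * Ynat K bn (c+1) < 2 ^ K := ih (c+1) (by omega)
        have h3 : bnn K bn (c+1) ≤ 1 := bnn_le hbn _
        have h4 : 2 ^ (c+1) * Ynat K bn c < 2 ^ K + 2 ^ K := by
          rw [h1]
          have := Nat.mul_le_mul_right (2 ^ K) h3
          omega
        have h6 : 2 * (2 ^ c * Ynat K bn c) < 2 * 2 ^ K := by
          calc 2 * (2 ^ c * Ynat K bn c) = 2 ^ (c+1) * Ynat K bn c := by rw [pow_succ]; ring
            _ < 2 ^ K + 2 ^ K := h4
            _ = 2 * 2 ^ K := by ring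
        omega
  exact key K c (by omega)

lemma C3 {K : ℕ} {bn : ℕ → ℕ} (hbn : ∀ i, bn i ≤ 1) (a r : ℕ) :
    Mnat K bn a r ≤ 2 ^ r - 1 := by
  unfold Mnat
  calc ∑ u ∈ Finset.range r, bnn K bn (a + r - u) * 2 ^ u
      ≤ ∑ u ∈ Finset.range r, 1 * 2 ^ u :=
        Finset.sum_le_sum fun u _ => Nat.mul_le_mul_right _ (bnn_le hbn _)
    _ = 2 ^ r - 1 := by simpa using geom_nat r
  
lemma C4 {K : ℕ} {bn : ℕ → ℕ} (hbn : ∀ i, bn i ≤ 1) (a r t : ℕ)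
    (ht1 : 1 ≤ t) (ht2 : t ≤ r) :
    (Mnat K bn a r / 2 ^ (r - t)) % 2 = bnn K bn (a + t) := by
  unfold Mnat
  rw [bit_extract (fun u => bnn K bn (a + r - u)) (fun u => bnn_le hbn _) (by omega)]
  congr 1
  omega


/-! ## Slot evaluation lemmas -/

lemma hWd (r : ℕ) : Wd r = 2 * 2 ^ r + 3 := by unfold Wd; rw [pow_succ]; ring

lemma L1_e0 (r K : ℕ) (x : Fin (Wd r) → ℝ) : L1 r K x (idx r 0) = x (idx r 0) := by
  unfold L1; rw [idx_val r 0 (Wd_pos r)]; norm_num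

lemma L1_e1 (r K : ℕ) (x : Fin (Wd r) → ℝ) : L1 r K x (idx r 1) = x (idx r 1) := by
  have := hWd r
  unfold L1; rw [idx_val r 1 (by omega)]; norm_num

lemma L1_e2 (r K : ℕ) (x : Fin (Wd r) → ℝ) : L1 r K x (idx r 2) = x (idx r 2) := by
  have := hWd r
  unfold L1; rw [idx_val r 2 (by omega)]; norm_num

lemma L1_eu (r K : ℕ) (hr : 0 < r) (x : Fin (Wd r) → ℝ) (s : ℕ) (hs1 : 1 ≤ s)
    (hs2 : s ≤ 2 ^ r - 1) :
    L1 r K x (idx r (s + 2)) = (2:ℝ) ^ K * ((2:ℝ) ^ r * x (idx r 0) - (s : ℝ)) + 1 := by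
  have hP := two_le_pow r hr
  have hW := hWd r
  unfold L1
  rw [idx_val r (s + 2) (by omega)]
  rw [if_neg (by omega), if_neg (by omega), if_neg (by omega), if_pos (by omega),
    show s + 2 - 2 = s by omega]

lemma L1_ev (r K : ℕ) (hr : 0 < r) (x : Fin (Wd r) → ℝ) (s : ℕ) (hs1 : 1 ≤ s)
    (hs2 : s ≤ 2 ^ r - 1) :
    L1 r K x (idx r (s + 1 + 2 ^ r)) = (2:ℝ) ^ K * ((2:ℝ) ^ r * x (idx r 0) - (s : ℝ)) := by
  have hP := two_le_pow r hr
  have hW := hWd r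
  have h2 : 2 ^ (r + 1) = 2 * 2 ^ r := by rw [pow_succ]; ring
  unfold L1
  rw [idx_val r (s + 1 + 2 ^ r) (by omega)]
  rw [if_neg (by omega), if_neg (by omega), if_neg (by omega), if_neg (by omega),
    if_pos (by omega), show s + 1 + 2 ^ r - 1 - 2 ^ r = s by omega]

lemma L2_e0 (r a : ℕ) (x : Fin (Wd r) → ℝ) :
    L2 r a x (idx r 0) = (2:ℝ) ^ r * x (idx r 0) -
      ∑ s ∈ Finset.Icc 1 (2 ^ r - 1), (x (idx r (s + 2)) - x (idx r (s + 1 + 2 ^ r))) := by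
  unfold L2; rw [idx_val r 0 (Wd_pos r)]; norm_num

lemma L2_e1 (r a : ℕ) (x : Fin (Wd r) → ℝ) : L2 r a x (idx r 1) = x (idx r 1) := by
  have := hWd r
  unfold L2; rw [idx_val r 1 (by omega)]; norm_num

lemma L2_e2 (r a : ℕ) (x : Fin (Wd r) → ℝ) : L2 r a x (idx r 2) = x (idx r 2) := by
  have := hWd r
  unfold L2; rw [idx_val r 2 (by omega)]; norm_num

lemma L2_ebit (r a : ℕ) (hr : 0 < r) (x : Fin (Wd r) → ℝ) (t : ℕ) (ht1 : 1 ≤ t)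
    (ht2 : t ≤ r) :
    L2 r a x (idx r (t + 2)) = ∑ s ∈ Finset.Icc 1 (2 ^ r - 1),
      (gbit r t s - gbit r t (s - 1)) * (x (idx r (s + 2)) - x (idx r (s + 1 + 2 ^ r))) := by
  have hP := two_le_pow r hr
  have hW := hWd r
  have hfour : 4 * r ≤ 2 * 2 ^ r := by
    have := four_r_le r; rw [pow_succ] at this; omega
  unfold L2
  rw [idx_val r (t + 2) (by omega)]
  rw [if_neg (by omega), if_neg (by omega), if_neg (by omega), if_pos (by omega),
    show t + 2 - 2 = t by omega]

lemma L2_eA (r a : ℕ) (hr : 0 < r) (x : Fin (Wd r) → ℝ) (t : ℕ) (ht1 : 1 ≤ t) (ht2 : t ≤ r) :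
    L2 r a x (idx r (t + 2 + r)) = x (idx r 1) - ((a + t : ℕ) : ℝ) + 1 := by
  have hP := two_le_pow r hr
  have hW := hWd r
  have hfour : 4 * r ≤ 2 * 2 ^ r := by
    have := four_r_le r; rw [pow_succ] at this; omega
  unfold L2
  rw [idx_val r (t + 2 + r) (by omega)]
  rw [if_neg (by omega), if_neg (by omega), if_neg (by omega), if_neg (by omega),
    if_pos (by omega), show t + 2 + r - 2 - r = t by omega]

lemma L2_eB (r a : ℕ) (hr : 0 < r) (x : Fin (Wd r) → ℝ) (t : ℕ) (ht1 : 1 ≤ t) (ht2 : t ≤ r) :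
    L2 r a x (idx r (t + 2 + 2 * r)) = x (idx r 1) - ((a + t : ℕ) : ℝ) := by
  have hP := two_le_pow r hr
  have hW := hWd r
  have hfour : 4 * r ≤ 2 * 2 ^ r := by
    have := four_r_le r; rw [pow_succ] at this; omega
  unfold L2
  rw [idx_val r (t + 2 + 2 * r) (by omega)]
  rw [if_neg (by omega), if_neg (by omega), if_neg (by omega), if_neg (by omega),
    if_neg (by omega), if_pos (by omega), show t + 2 + 2 * r - 2 - 2 * r = t by omega]

lemma L2_eC (r a : ℕ) (hr : 0 < r) (x : Fin (Wd r) → ℝ) (t : ℕ) (ht1 : 1 ≤ t) (ht2 : t ≤ r) :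
    L2 r a x (idx r (t + 2 + 3 * r)) = x (idx r 1) - ((a + t : ℕ) : ℝ) - 1 := by
  have hP := two_le_pow r hr
  have hW := hWd r
  have hfour : 4 * r ≤ 2 * 2 ^ r := by
    have := four_r_le r; rw [pow_succ] at this; omega
  unfold L2
  rw [idx_val r (t + 2 + 3 * r) (by omega)]
  rw [if_neg (by omega), if_neg (by omega), if_neg (by omega), if_neg (by omega),
    if_neg (by omega), if_neg (by omega), if_pos (by omega),
    show t + 2 + 3 * r - 2 - 3 * r = t by omega]

lemma L3_e0 (r : ℕ) (x : Fin (Wd r) → ℝ) : L3 r x (idx r 0) = x (idx r 0) := by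
  unfold L3; rw [idx_val r 0 (Wd_pos r)]; norm_num

lemma L3_e1 (r : ℕ) (x : Fin (Wd r) → ℝ) : L3 r x (idx r 1) = x (idx r 1) := by
  have := hWd r
  unfold L3; rw [idx_val r 1 (by omega)]; norm_num

lemma L3_e2 (r : ℕ) (x : Fin (Wd r) → ℝ) : L3 r x (idx r 2) = x (idx r 2) := by
  have := hWd r
  unfold L3; rw [idx_val r 2 (by omega)]; norm_num

lemma L3_ew (r : ℕ) (hr : 0 < r) (x : Fin (Wd r) → ℝ) (t : ℕ) (ht1 : 1 ≤ t) (ht2 : t ≤ r) :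
    L3 r x (idx r (t + 2)) = x (idx r (t + 2)) +
      (x (idx r (t + 2 + r)) - 2 * x (idx r (t + 2 + 2 * r)) + x (idx r (t + 2 + 3 * r))) - 1 := by
  have hP := two_le_pow r hr
  have hW := hWd r
  have hfour : 4 * r ≤ 2 * 2 ^ r := by
    have := four_r_le r; rw [pow_succ] at this; omega
  unfold L3
  rw [idx_val r (t + 2) (by omega)]
  rw [if_neg (by omega), if_neg (by omega), if_neg (by omega), if_pos (by omega)]

lemma L4_e0 (r : ℕ) (x : Fin (Wd r) → ℝ) : L4 r x (idx r 0) = x (idx r 0) := by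
  unfold L4; rw [idx_val r 0 (Wd_pos r)]; norm_num

lemma L4_e1 (r : ℕ) (x : Fin (Wd r) → ℝ) : L4 r x (idx r 1) = x (idx r 1) := by
  have := hWd r
  unfold L4; rw [idx_val r 1 (by omega)]; norm_num

lemma L4_e2 (r : ℕ) (x : Fin (Wd r) → ℝ) :
    L4 r x (idx r 2) = x (idx r 2) + ∑ t ∈ Finset.Icc 1 r, x (idx r (t + 2)) := by
  have := hWd r
  unfold L4; rw [idx_val r 2 (by omega)]; norm_num

/-! ## Chunk evaluation -/

lemma chunk_eval (r K : ℕ) (hr : 0 < r) (bn : ℕ → ℕ) (hbn : ∀ i, bn i ≤ 1)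
    (a k : ℕ) (acc : ℝ) (hacc : 0 ≤ acc) (x : Fin (Wd r) → ℝ)
    (hx0 : x (idx r 0) = 2 ^ a * (Ynat K bn a : ℝ) / 2 ^ K)
    (hx1 : x (idx r 1) = (k : ℝ)) (hx2 : x (idx r 2) = acc) :
    chunkMap r K a x (idx r 0) = 2 ^ (a + r) * (Ynat K bn (a + r) : ℝ) / 2 ^ K ∧
    chunkMap r K a x (idx r 1) = (k : ℝ) ∧
    chunkMap r K a x (idx r 2)
      = acc + (if a < k ∧ k ≤ a + r then ((bnn K bn k : ℕ) : ℝ) else 0) := by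
  have h2K : (0:ℝ) < 2 ^ K := by positivity
  have hCreal : (2:ℝ) ^ r * ((2:ℝ) ^ a * (Ynat K bn a : ℝ))
      = (Mnat K bn a r : ℝ) * 2 ^ K + 2 ^ (a + r) * (Ynat K bn (a + r) : ℝ) := by
    exact_mod_cast C1 K bn a r
  have hm_le : Mnat K bn a r ≤ 2 ^ r - 1 := C3 hbn a r
  obtain ⟨y1, hy1⟩ : ∃ y1, y1 = fun i => max (L1 r K x i) 0 := ⟨_, rfl⟩
  obtain ⟨y2, hy2⟩ : ∃ y2, y2 = fun i => max (L2 r a y1 i) 0 := ⟨_, rfl⟩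
  obtain ⟨y3, hy3⟩ : ∃ y3, y3 = fun i => max (L3 r y2 i) 0 := ⟨_, rfl⟩
  have hchunk : ∀ i, chunkMap r K a x i = max (L4 r y3 i) 0 := by
    intro i; rw [hy3, hy2, hy1]; rfl
  -- stage 1
  have e1_0 : y1 (idx r 0) = 2 ^ a * (Ynat K bn a : ℝ) / 2 ^ K := by
    simp only [hy1]
    rw [L1_e0, hx0, max_eq_left (by positivity)]
  have e1_1 : y1 (idx r 1) = (k : ℝ) := by
    simp only [hy1]
    rw [L1_e1, hx1, max_eq_left (by positivity)]
  have e1_2 : y1 (idx r 2) = acc := by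
    simp only [hy1]
    rw [L1_e2, hx2, max_eq_left hacc]
  have hstep : ∀ s ∈ Finset.Icc 1 (2 ^ r - 1),
      y1 (idx r (s + 2)) - y1 (idx r (s + 1 + 2 ^ r))
        = if s ≤ Mnat K bn a r then (1:ℝ) else 0 := by
    intro s hs
    rw [Finset.mem_Icc] at hs
    simp only [hy1]
    rw [L1_eu r K hr x s hs.1 hs.2, L1_ev r K hr x s hs.1 hs.2, hx0]
    have hkey : (2:ℝ) ^ K * ((2:ℝ) ^ r * ((2:ℝ) ^ a * (Ynat K bn a : ℝ) / 2 ^ K) - (s : ℝ))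
        = ((Mnat K bn a r : ℕ) : ℝ) * 2 ^ K + ((2 ^ (a + r) * Ynat K bn (a + r) : ℕ) : ℝ)
          - (s : ℝ) * 2 ^ K := by
      push_cast
      field_simp
      linear_combination hCreal
    rw [hkey]
    exact step_eval K (Mnat K bn a r) (2 ^ (a + r) * Ynat K bn (a + r)) s (C2 hbn (a + r))
  have hsum1 : ∑ s ∈ Finset.Icc 1 (2 ^ r - 1),
      (y1 (idx r (s + 2)) - y1 (idx r (s + 1 + 2 ^ r))) = (Mnat K bn a r : ℝ) := by
    rw [Finset.sum_congr rfl hstep, sum_ite_le hm_le (fun _ => (1:ℝ))]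
    simp
  have hbitv : ∀ t, 1 ≤ t → t ≤ r →
      ∑ s ∈ Finset.Icc 1 (2 ^ r - 1), (gbit r t s - gbit r t (s - 1)) *
        (y1 (idx r (s + 2)) - y1 (idx r (s + 1 + 2 ^ r))) = ((bnn K bn (a + t) : ℕ) : ℝ) := by
    intro t ht1 ht2
    rw [Finset.sum_congr rfl (fun s hs => by rw [hstep s hs, mul_ite, mul_one, mul_zero])]
    rw [sum_ite_le hm_le (fun s => gbit r t s - gbit r t (s - 1))]
    rw [telescope _ _ (by simp [gbit])]
    unfold gbit
    rw [C4 hbn a r t ht1 ht2]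
  -- stage 2
  have e2_0 : y2 (idx r 0) = 2 ^ (a + r) * (Ynat K bn (a + r) : ℝ) / 2 ^ K := by
    simp only [hy2]
    rw [L2_e0, hsum1, e1_0]
    have hv : (2:ℝ) ^ r * ((2:ℝ) ^ a * (Ynat K bn a : ℝ) / 2 ^ K) - (Mnat K bn a r : ℝ)
        = 2 ^ (a + r) * (Ynat K bn (a + r) : ℝ) / 2 ^ K := by
      field_simp
      linear_combination hCreal
    rw [hv, max_eq_left (by positivity)]
  have e2_1 : y2 (idx r 1) = (k : ℝ) := by
    simp only [hy2]
    rw [L2_e1, e1_1, max_eq_left (by positivity)]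
  have e2_2 : y2 (idx r 2) = acc := by
    simp only [hy2]
    rw [L2_e2, e1_2, max_eq_left hacc]
  have e2_bit : ∀ t, 1 ≤ t → t ≤ r →
      y2 (idx r (t + 2)) = ((bnn K bn (a + t) : ℕ) : ℝ) := by
    intro t ht1 ht2
    simp only [hy2]
    rw [L2_ebit r a hr y1 t ht1 ht2, hbitv t ht1 ht2, max_eq_left (by positivity)]
  have e2_A : ∀ t, 1 ≤ t → t ≤ r →
      y2 (idx r (t + 2 + r)) = max ((k : ℝ) - ((a + t : ℕ) : ℝ) + 1) 0 := by
    intro t ht1 ht2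
    simp only [hy2]
    rw [L2_eA r a hr y1 t ht1 ht2, e1_1]
  have e2_B : ∀ t, 1 ≤ t → t ≤ r →
      y2 (idx r (t + 2 + 2 * r)) = max ((k : ℝ) - ((a + t : ℕ) : ℝ)) 0 := by
    intro t ht1 ht2
    simp only [hy2]
    rw [L2_eB r a hr y1 t ht1 ht2, e1_1]
  have e2_C : ∀ t, 1 ≤ t → t ≤ r →
      y2 (idx r (t + 2 + 3 * r)) = max ((k : ℝ) - ((a + t : ℕ) : ℝ) - 1) 0 := by
    intro t ht1 ht2
    simp only [hy2]
    rw [L2_eC r a hr y1 t ht1 ht2, e1_1]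
  -- stage 3
  have e3_0 : y3 (idx r 0) = 2 ^ (a + r) * (Ynat K bn (a + r) : ℝ) / 2 ^ K := by
    simp only [hy3]
    rw [L3_e0, e2_0, max_eq_left (by positivity)]
  have e3_1 : y3 (idx r 1) = (k : ℝ) := by
    simp only [hy3]
    rw [L3_e1, e2_1, max_eq_left (by positivity)]
  have e3_2 : y3 (idx r 2) = acc := by
    simp only [hy3]
    rw [L3_e2, e2_2, max_eq_left hacc]
  have e3_w : ∀ t, 1 ≤ t → t ≤ r →
      y3 (idx r (t + 2)) = (if k = a + t then ((bnn K bn (a + t) : ℕ) : ℝ) else 0) := by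
    intro t ht1 ht2
    simp only [hy3]
    rw [L3_ew r hr y2 t ht1 ht2, e2_bit t ht1 ht2, e2_A t ht1 ht2, e2_B t ht1 ht2,
      e2_C t ht1 ht2]
    rw [hat_eval k (a + t)]
    have hβ : ((bnn K bn (a + t) : ℕ) : ℝ) ≤ 1 := by
      exact_mod_cast bnn_le hbn (a + t)
    by_cases hk : k = a + t
    · rw [if_pos hk, if_pos hk, show ((bnn K bn (a + t) : ℕ) : ℝ) + 1 - 1
        = ((bnn K bn (a + t) : ℕ) : ℝ) by ring, max_eq_left (by positivity)]
    · rw [if_neg hk, if_neg hk, max_eq_right (by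
        have : (0:ℝ) ≤ ((bnn K bn (a + t) : ℕ) : ℝ) := by positivity
        linarith)]
  -- stage 4
  have hind : (0:ℝ) ≤ (if a < k ∧ k ≤ a + r then ((bnn K bn k : ℕ) : ℝ) else 0) := by
    split_ifs
    · positivity
    · exact le_refl 0
  refine ⟨?_, ?_, ?_⟩
  · rw [hchunk, L4_e0, e3_0, max_eq_left (by positivity)]
  · rw [hchunk, L4_e1, e3_1, max_eq_left (by positivity)]
  · rw [hchunk, L4_e2, e3_2]
    have hsum3 : ∑ t ∈ Finset.Icc 1 r, y3 (idx r (t + 2))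
        = ∑ t ∈ Finset.Icc 1 r, (if k = a + t then ((bnn K bn (a + t) : ℕ) : ℝ) else 0) :=
      Finset.sum_congr rfl (fun t ht => by
        rw [Finset.mem_Icc] at ht
        exact e3_w t ht.1 ht.2)
    rw [hsum3, sum_single_ind a r k (fun n => ((bnn K bn n : ℕ) : ℝ))]
    rw [max_eq_left (by linarith)]

/-! ## Full network evaluation -/

lemma Hnet_eval (r K : ℕ) (hr : 0 < r) (bn : ℕ → ℕ) (hbn : ∀ i, bn i ≤ 1) (k : ℕ) :
    ∀ c j₀ (x : Fin (Wd r) → ℝ) (acc : ℝ), 0 ≤ acc →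
      x (idx r 0) = 2 ^ (j₀ * r) * (Ynat K bn (j₀ * r) : ℝ) / 2 ^ K →
      x (idx r 1) = (k : ℝ) → x (idx r 2) = acc →
      Hnet r K c j₀ x
        = acc + (if j₀ * r < k ∧ k ≤ j₀ * r + c * r then ((bnn K bn k : ℕ) : ℝ) else 0) := by
  intro c
  induction c with
  | zero =>
    intro j₀ x acc hacc h0 h1 h2
    simp only [Hnet]
    rw [h2, if_neg (by omega)]
    ring
  | succ c ih =>
    intro j₀ x acc hacc h0 h1 h2
    simp only [Hnet]
    obtain ⟨g0, g1, g2⟩ := chunk_eval r K hr bn hbn (j₀ * r) k acc hacc x h0 h1 h2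
    have hacc' : 0 ≤ acc + (if j₀ * r < k ∧ k ≤ j₀ * r + r then ((bnn K bn k : ℕ) : ℝ) else 0) := by
      have : (0:ℝ) ≤ (if j₀ * r < k ∧ k ≤ j₀ * r + r then ((bnn K bn k : ℕ) : ℝ) else 0) := by
        split_ifs
        · positivity
        · exact le_refl 0
      linarith
    have harith : (j₀ + 1) * r = j₀ * r + r := by ring
    have hrec := ih (j₀ + 1) (chunkMap r K (j₀ * r) x) _ hacc' (by rw [harith]; exact g0) g1 g2
    have e2' : (c + 1) * r = c * r + r := by ring
    set q := j₀ * r with hq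
    set d := c * r with hd
    rw [harith] at hrec
    rw [hrec, e2']
    by_cases hA : q < k ∧ k ≤ q + r <;> by_cases hB : q + r < k ∧ k ≤ q + r + d
    · exfalso; omega
    · rw [if_pos hA, if_neg hB, if_pos (by omega)]; ring
    · rw [if_neg hA, if_pos hB, if_pos (by omega)]; ring
    · rw [if_neg hA, if_neg hB, if_neg (by omega)]; ring

end Stmt7

open Stmt7

/-- Lemma `extract one bit`. -/
theorem stmt7 (r K : ℕ) (hr : 0 < r) (hrK : r ≤ K) :
    ∃ φ : (Fin 2 → ℝ) → ℝ,
      IsReluNet1 2 φ (2 ^ (r + 1) + 3) (4 * ⌈(K : ℝ) / (r : ℝ)⌉₊ + 1) ∧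
      ∀ b : ℕ → ℝ, (∀ i, b i = 0 ∨ b i = 1) →
        ∀ k : ℕ, 1 ≤ k → k ≤ K →
          φ ![∑ i ∈ Finset.Icc 1 K, b i / 2 ^ i, (k : ℝ)] = b k := by
  classical
  set M := ⌈(K : ℝ) / (r : ℝ)⌉₊ with hM
  set emb : (Fin 2 → ℝ) → (Fin (Wd r) → ℝ) :=
    fun v i => if (i : ℕ) = 0 then v 0 else if (i : ℕ) = 1 then v 1 else 0 with hemb'
  have hW := hWd r
  have hP := two_le_pow r hr
  refine ⟨fun v => Hnet r K M 0 (emb v), ?_, ?_⟩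
  · refine ⟨4 * M + 1, le_refl _, ?_⟩
    have hembA : IsAffineMap 2 (Wd r) emb := by
      apply isAffineMap_of
      intro i
      simp only [hemb']
      by_cases h1 : (i : ℕ) = 0
      · simp only [h1, if_pos]
        simpa using affFun_coord (n := 2) 0
      by_cases h2 : (i : ℕ) = 1
      · simp only [h1, h2, if_neg, if_pos, if_true, if_false]
        exact affFun_coord _
      · simp only [h1, h2, if_neg, if_false]
        exact affFun_const 0
    have hnet := netPrecomp (Hnet_isNet r K M 0) hembA
    exact hnet
  · intro b hb k hk1 hkK
    set bn : ℕ → ℕ := fun i => if b i = 1 then 1 else 0 with hbndef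
    have hbn : ∀ i, bn i ≤ 1 := by
      intro i; simp only [hbndef]; split <;> omega
    have hbcast : ∀ i, ((bn i : ℕ) : ℝ) = b i := by
      intro i; rcases hb i with h | h <;> simp [hbndef, h]
    have hx1 : emb ![∑ i ∈ Finset.Icc 1 K, b i / 2 ^ i, (k : ℝ)] (idx r 1) = (k : ℝ) := by
      simp only [hemb']
      rw [idx_val r 1 (by omega)]
      norm_num
    have hx2 : emb ![∑ i ∈ Finset.Icc 1 K, b i / 2 ^ i, (k : ℝ)] (idx r 2) = 0 := by
      simp only [hemb']
      rw [idx_val r 2 (by omega)]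
      norm_num
    have hx0 : emb ![∑ i ∈ Finset.Icc 1 K, b i / 2 ^ i, (k : ℝ)] (idx r 0)
        = 2 ^ (0 * r) * (Ynat K bn (0 * r) : ℝ) / 2 ^ K := by
      simp only [hemb']
      rw [idx_val r 0 (by omega)]
      norm_num
      have hy : (Ynat K bn 0 : ℝ) = ∑ i ∈ Finset.Icc 1 K, ((bn i : ℕ) : ℝ) * 2 ^ (K - i) := by
        unfold Ynat
        push_cast
        rfl
      rw [hy, Finset.sum_div]
      apply Finset.sum_congr rfl
      intro i hi
      rw [Finset.mem_Icc] at hi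
      have h2i : (2:ℝ) ^ (K - i) * 2 ^ i = 2 ^ K := by
        rw [← pow_add]; congr 1; omega
      rw [← hbcast i, div_eq_div_iff (by positivity) (by positivity)]
      linear_combination (-((bn i : ℕ) : ℝ)) * h2i
    have heval := Hnet_eval r K hr bn hbn k M 0 _ 0 le_rfl hx0 hx1 hx2
    have hKMr : K ≤ M * r := by
      have h1 : (K : ℝ) / (r : ℝ) ≤ (M : ℝ) := Nat.le_ceil _
      have hr' : (0:ℝ) < (r : ℝ) := by exact_mod_cast hr
      have h2 : (K : ℝ) ≤ (M : ℝ) * (r : ℝ) := by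
        rw [div_le_iff₀ hr'] at h1
        exact h1
      exact_mod_cast h2
    beta_reduce
    rw [heval, if_pos ⟨by omega, by omega⟩, zero_add]
    show ((bnn K bn k : ℕ) : ℝ) = b k
    unfold bnn
    rw [if_pos hkK, hbcast k]
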